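/- In the quadratic space ℚ³⁰ with bilinear form given by the intersection matrix M of the curves E_{ij}^β indexed by pairs {i,j} ⊂ {1,…,5} and β ∈ μ₃ (diagonal −3; entry 1 when index pairs disjoint; else 0), let (a₁,…,a₅) ∈ μ₃⁵ with a₁a₂a₃a₄a₅ = 1 and let D = Σ_{1 ≤ i < j ≤ 5} v_{ij}^{aᵢ/aⱼ} (a sum of 10 basis vectors, one for each pair). Then ⟨D, D⟩ = 0 and ⟨Σ, D⟩ = 60 where Σ is the sum of all 30 basis vectors; consequently the arithmetic genus 1 + (D² + (Σ/2)·D)/2 equals 16. -/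

import Mathlib

set_option maxRecDepth 10000


open Finset

/-- Index set for the 30 elliptic curves `E_{ij}^β`: a pair `i < j` in `Fin 5`
together with `β ∈ μ₃` encoded as `ZMod 3`. -/
abbrev Idx : Type := {p : Fin 5 × Fin 5 // p.1 < p.2} × ZMod 3

/-- The 30×30 intersection matrix of the curves `E_{ij}^β`: `−3` on the diagonal,
`1` between indices with disjoint pairs `{i,j} ∩ {s,t} = ∅`, and `0` otherwise. -/
def M : Matrix Idx Idx ℚ := fun x y =>
  if x = y then -3
  else if x.1.1.1 ≠ y.1.1.1 ∧ x.1.1.1 ≠ y.1.1.2 ∧ x.1.1.2 ≠ y.1.1.1 ∧ x.1.1.2 ≠ y.1.1.2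
  then 1 else 0

/-- The pairing given by the intersection matrix `M`. -/
def pair (x y : Idx → ℚ) : ℚ := dotProduct x (M.mulVec y)

/-- The sum `Σ` of all 30 basis vectors. -/
def Sig : Idx → ℚ := ∑ x : Idx, Pi.single x 1

abbrev P : Type := {p : Fin 5 × Fin 5 // p.1 < p.2}

def Mred (p q : P) : ℤ :=
  if p = q then -3
  else if p.1.1 ≠ q.1.1 ∧ p.1.1 ≠ q.1.2 ∧ p.1.2 ≠ q.1.1 ∧ p.1.2 ≠ q.1.2
  then 1 else 0

def Mcol (p q : P) : ℤ :=
  if p = q then -3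
  else if p.1.1 ≠ q.1.1 ∧ p.1.1 ≠ q.1.2 ∧ p.1.2 ≠ q.1.1 ∧ p.1.2 ≠ q.1.2
  then 3 else 0

lemma M_red (p q : P) (β γ : ZMod 3) (h : p = q → β = γ) :
    M (p, β) (q, γ) = (Mred p q : ℚ) := by
  unfold M Mred
  by_cases hpq : p = q
  · subst hpq
    simp [h rfl]
  · have hne : ((p, β) : Idx) ≠ (q, γ) := by simp [hpq]
    rw [if_neg hne, if_neg hpq]
    push_cast
    rfl

lemma M_col (p q : P) (γ : ZMod 3) :
    ∑ β : ZMod 3, M (p, β) (q, γ) = (Mcol p q : ℚ) := by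
  by_cases hpq : p = q
  · subst hpq
    have hd : ¬((p:Fin 5 × Fin 5).1 ≠ (p:Fin 5 × Fin 5).1 ∧ (p:Fin 5 × Fin 5).1 ≠ (p:Fin 5 × Fin 5).2
        ∧ (p:Fin 5 × Fin 5).2 ≠ (p:Fin 5 × Fin 5).1 ∧ (p:Fin 5 × Fin 5).2 ≠ (p:Fin 5 × Fin 5).2) := by
      simp
    have key : ∀ β : ZMod 3, M (p, β) (p, γ) = if β = γ then (-3 : ℚ) else 0 := by
      intro β
      unfold M
      by_cases hb : β = γ
      · simp [hb]
      · have h1 : ((p, β) : Idx) ≠ (p, γ) := by simp [hb]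
        rw [if_neg h1, if_neg hd, if_neg hb]
    rw [Finset.sum_congr rfl fun β _ => key β,
      Finset.sum_ite_eq' Finset.univ γ (fun _ => (-3 : ℚ))]
    simp [Mcol]
  · have key : ∀ β : ZMod 3, M (p, β) (q, γ) = (Mred p q : ℚ) :=
      fun β => M_red p q β γ (fun h => absurd h hpq)
    rw [Finset.sum_congr rfl fun β _ => key β, Finset.sum_const]
    have hcard : (Finset.univ : Finset (ZMod 3)).card = 3 := rfl
    rw [hcard]
    unfold Mred Mcol
    rw [if_neg hpq, if_neg hpq]
    split <;> push_cast <;> ring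

lemma pair_eq (x y : Idx → ℚ) : pair x y = Matrix.toBilin' M x y :=
  (Matrix.toBilin'_apply' M x y).symm

lemma pair_sum_sum {ι κ : Type} [Fintype ι] [Fintype κ] (x : ι → Idx → ℚ) (y : κ → Idx → ℚ) :
    pair (∑ i, x i) (∑ j, y j) = ∑ i, ∑ j, pair (x i) (y j) := by
  simp only [pair_eq, map_sum, LinearMap.sum_apply]
  rw [Finset.sum_comm]

lemma pair_single (i j : Idx) : pair (Pi.single i 1) (Pi.single j 1) = M i j := by
  unfold pair
  rw [Matrix.mulVec_single]
  simp [single_dotProduct]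

lemma sum_Mred : ∑ p : P, ∑ q : P, Mred p q = 0 := by decide
lemma sum_Mcol : ∑ p : P, ∑ q : P, Mcol p q = 60 := by decide

/-- For `(a₁,…,a₅) ∈ μ₃⁵` with product `1` (encoded additively in `ZMod 3` with sum `0`)
and `D = Σ_{i<j} v_{ij}^{aᵢ/aⱼ}`: `⟨D,D⟩ = 0`, `⟨Σ,D⟩ = 60`, and the arithmetic genus
`1 + (D² + (Σ/2)·D)/2` equals `16`. -/
theorem stmt_12 (a : Fin 5 → ZMod 3) (ha : ∑ i, a i = 0) :
    let D : Idx → ℚ := ∑ p : {p : Fin 5 × Fin 5 // p.1 < p.2},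
      Pi.single (⟨p, a p.1.1 - a p.1.2⟩ : Idx) (1 : ℚ)
    pair D D = 0 ∧ pair Sig D = 60 ∧
      1 + (pair D D + pair ((2 : ℚ)⁻¹ • Sig) D) / 2 = 16 := by
  intro D
  have hDD : pair D D = 0 := by
    show pair (∑ p : P, _) (∑ p : P, _) = 0
    rw [pair_sum_sum]
    have h1 : ∀ p q : P, pair (Pi.single ((⟨p, a p.1.1 - a p.1.2⟩ : Idx)) (1:ℚ))
        (Pi.single ((⟨q, a q.1.1 - a q.1.2⟩ : Idx)) (1:ℚ)) = (Mred p q : ℚ) := by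
      intro p q
      rw [pair_single, M_red]
      intro h; subst h; rfl
    rw [Finset.sum_congr rfl fun p _ => Finset.sum_congr rfl fun q _ => h1 p q]
    simp only [← Int.cast_sum]
    exact_mod_cast congrArg (fun n : ℤ => (n : ℚ)) sum_Mred
  have hSD : pair Sig D = 60 := by
    show pair (∑ x : Idx, _) (∑ p : P, _) = 60
    rw [pair_sum_sum, Fintype.sum_prod_type]
    have h1 : ∀ p : P, (∑ β : ZMod 3, ∑ q : P,
        pair (Pi.single ((p, β) : Idx) (1:ℚ))
        (Pi.single ((⟨q, a q.1.1 - a q.1.2⟩ : Idx)) (1:ℚ))) = ∑ q : P, (Mcol p q : ℚ) := by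
      intro p
      rw [Finset.sum_comm]
      refine Finset.sum_congr rfl fun q _ => ?_
      rw [← M_col p q (a q.1.1 - a q.1.2)]
      exact Finset.sum_congr rfl fun β _ => pair_single _ _
    rw [Finset.sum_congr rfl fun p _ => h1 p]
    simp only [← Int.cast_sum]
    exact_mod_cast congrArg (fun n : ℤ => (n : ℚ)) sum_Mcol
  refine ⟨hDD, hSD, ?_⟩
  have hsmul : pair ((2 : ℚ)⁻¹ • Sig) D = (2:ℚ)⁻¹ * pair Sig D := by
    unfold pair
    rw [smul_dotProduct]
    simp
  rw [hDD, hsmul, hSD]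
  norm_num
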